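/- For any prime p and nonnegative integers a, b, r, s with 0 ≤ b, s ≤ p−1, the Gaussian binomial coefficient C(ap+b, rp+s)_q is congruent to C(a,r)·C(b,s)_q modulo [p]_q in ℤ[q]. -/

import Mathlib

open Polynomial Finset

noncomputable def qInt (n : ℕ) : Polynomial ℤ := ∑ i ∈ Finset.range n, X ^ i

noncomputable def qBinom : ℕ → ℕ → Polynomial ℤ
  | _, 0 => 1
  | 0, _ + 1 => 0
  | n + 1, k + 1 => qBinom n k + X ^ (k + 1) * qBinom n (k + 1)

lemma qBinom_zero_right (n : ℕ) : qBinom n 0 = 1 := by cases n <;> rfl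

lemma qBinom_succ_succ (n k : ℕ) :
    qBinom (n+1) (k+1) = qBinom n k + X ^ (k+1) * qBinom n (k+1) := rfl

lemma qBinom_eq_zero : ∀ {n k : ℕ}, n < k → qBinom n k = 0
  | 0, _+1, _ => rfl
  | n+1, k+1, h => by
    rw [qBinom_succ_succ, qBinom_eq_zero (by omega), qBinom_eq_zero (by omega)]
    ring

lemma qBinom_self : ∀ n : ℕ, qBinom n n = 1
  | 0 => rfl
  | n+1 => by
    rw [qBinom_succ_succ, qBinom_self n, qBinom_eq_zero (by omega)]
    ring

lemma qInt_succ (n : ℕ) : qInt (n+1) = qInt n + X ^ n := by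
  simp [qInt, Finset.sum_range_succ]

lemma qInt_add : ∀ a b : ℕ, qInt (a + b) = qInt a + X ^ a * qInt b
  | a, 0 => by simp [qInt]
  | a, b+1 => by
    rw [show a + (b+1) = (a+b)+1 by ring, qInt_succ, qInt_add a b, qInt_succ]
    ring

lemma qInt_mul (n : ℕ) : qInt n * (X - 1) = X ^ n - 1 := by
  simpa [qInt] using geom_sum_mul (X : Polynomial ℤ) n

lemma qInt_ne_zero {n : ℕ} (h : 0 < n) : qInt n ≠ 0 := by
  intro hc
  have : (qInt n).eval 1 = n := by simp [qInt, eval_finset_sum]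
  rw [hc] at this
  simp at this
  omega

lemma qInt_natDegree {n : ℕ} (h : 0 < n) : (qInt n).natDegree = n - 1 := by
  have h2 : ((X : Polynomial ℤ) - 1) ≠ 0 := X_sub_C_ne_zero 1
  have := natDegree_mul (qInt_ne_zero h) h2
  rw [qInt_mul] at this
  have hd : ((X : Polynomial ℤ) ^ n - 1).natDegree = n := by
    simpa using natDegree_X_pow_sub_C (n := n) (r := (1 : ℤ))
  have hd2 : ((X : Polynomial ℤ) - 1).natDegree = 1 := by
    simpa using natDegree_X_sub_C (1 : ℤ)
  omega

lemma qInt_prime {p : ℕ} (hp : p.Prime) : Prime (qInt p) := by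
  haveI := Fact.mk hp
  have h : qInt p = cyclotomic p ℤ := (cyclotomic_prime ℤ p).symm
  rw [h]
  exact (UniqueFactorizationMonoid.irreducible_iff_prime).mp (cyclotomic.irreducible hp.pos)

noncomputable def qfact : ℕ → Polynomial ℤ
  | 0 => 1
  | n+1 => qfact n * qInt (n+1)

lemma qfact_zero : qfact 0 = 1 := rfl

lemma qfact_succ (n : ℕ) : qfact (n+1) = qfact n * qInt (n+1) := rfl

lemma qBinom_mul_qfact : ∀ n k : ℕ, k ≤ n →
    qBinom n k * (qfact k * qfact (n - k)) = qfact n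
  | 0, 0, _ => by simp [qBinom_zero_right, qfact_zero]
  | n+1, 0, _ => by simp [qBinom_zero_right, qfact_zero]
  | n+1, k+1, h => by
    rcases eq_or_lt_of_le h with heq | hlt
    · have hk : k = n := by omega
      subst hk
      rw [qBinom_self, Nat.sub_self, one_mul, qfact_zero, mul_one]
    · have hk : k ≤ n := by omega
      have hk1 : k + 1 ≤ n := by omega
      have e1 := qBinom_mul_qfact n k hk
      have e2 := qBinom_mul_qfact n (k+1) hk1
      have hsub : n + 1 - (k+1) = (n - (k+1)) + 1 := by omega
      have hsub2 : n - k = (n - (k+1)) + 1 := by omega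
      have key : qInt (n+1+1-1) = qInt (k+1) + X ^ (k+1) * qInt (n - (k+1) + 1) := by
        rw [← qInt_add]
        congr 1
        omega
      simp only [Nat.add_sub_cancel] at key
      rw [hsub2, qfact_succ] at e1
      rw [qfact_succ] at e2
      rw [qBinom_succ_succ, hsub, qfact_succ, qfact_succ, qfact_succ, key]
      linear_combination qInt (k+1) * e1 + X ^ (k+1) * qInt (n - (k+1) + 1) * e2

lemma qInt_not_dvd_qfact {p : ℕ} (hp : p.Prime) : ∀ j : ℕ, j < p → ¬ qInt p ∣ qfact j
  | 0, _, h => hp.one_lt.ne' (by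
      have := (qInt_prime hp).not_unit (isUnit_of_dvd_one h)
      exact absurd this (by simp) ) |>.elim
  | j+1, hj, h => by
    rcases (qInt_prime hp).2.2 _ _ h with h1 | h2
    · exact qInt_not_dvd_qfact hp j (by omega) h1
    · have := Polynomial.natDegree_le_of_dvd h2 (qInt_ne_zero (by omega))
      rw [qInt_natDegree hp.pos, qInt_natDegree (by omega : 0 < j+1)] at this
      omega

lemma qInt_dvd_qBinom {p : ℕ} (hp : p.Prime) {k : ℕ} (h0 : 0 < k) (hk : k < p) :
    qInt p ∣ qBinom p k := by
  have e := qBinom_mul_qfact p k hk.le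
  have hdvd : qInt p ∣ qBinom p k * (qfact k * qfact (p - k)) := by
    rw [e]
    rw [show p = (p-1)+1 from by omega, qfact_succ, show p - 1 + 1 = p from by omega]
    exact dvd_mul_left _ _
  rcases (qInt_prime hp).2.2 _ _ hdvd with h | h
  · exact h
  · rcases (qInt_prime hp).2.2 _ _ h with h | h
    · exact absurd h (qInt_not_dvd_qfact hp k hk)
    · exact absurd h (qInt_not_dvd_qfact hp (p-k) (by omega))

lemma qInt_dvd_X_pow_sub_one (p : ℕ) : qInt p ∣ X ^ p - 1 :=
  ⟨X - 1, (qInt_mul p).symm⟩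

lemma key_lemma {p : ℕ} (hp : p.Prime) (n : ℕ) : ∀ k : ℕ,
    qInt p ∣ qBinom (n + p) k - (qBinom n k + if p ≤ k then qBinom n (k - p) else 0) := by
  induction n with
  | zero =>
    intro k
    rw [zero_add]
    rcases Nat.lt_trichotomy k p with hlt | heq | hgt
    · rcases Nat.eq_zero_or_pos k with rfl | hk0
      · simp [qBinom_zero_right, Nat.not_le.mpr hp.pos]
      · rw [if_neg (by omega), qBinom_eq_zero (by omega : (0:ℕ) < k)]
        simpa using qInt_dvd_qBinom hp hk0 hlt
    · subst heq
      rw [if_pos le_rfl, Nat.sub_self, qBinom_self, qBinom_zero_right,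
        qBinom_eq_zero hp.pos]
      simp
    · rw [qBinom_eq_zero hgt, qBinom_eq_zero (by omega : (0:ℕ) < k),
        if_pos (by omega), qBinom_eq_zero (by omega : (0:ℕ) < k - p)]
      simp
  | succ n ih =>
    intro k
    rcases Nat.eq_zero_or_pos k with rfl | hk0
    · simp [qBinom_zero_right, Nat.not_le.mpr hp.pos]
    obtain ⟨k, rfl⟩ : ∃ m, k = m + 1 := ⟨k - 1, by omega⟩
    have hP : qBinom (n + 1 + p) (k+1) = qBinom (n+p) k + X ^ (k+1) * qBinom (n+p) (k+1) := by
      rw [show n + 1 + p = (n + p) + 1 from by omega, qBinom_succ_succ]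
    have A := ih k
    have B := ih (k+1)
    rcases Nat.lt_trichotomy (k+1) p with hlt | heq | hgt
    · rw [if_neg (by omega)] at A B ⊢
      have : qBinom (n + 1 + p) (k+1) - (qBinom (n+1) (k+1) + 0) =
          (qBinom (n+p) k - (qBinom n k + 0)) +
          X ^ (k+1) * (qBinom (n+p) (k+1) - (qBinom n (k+1) + 0)) := by
        rw [hP, qBinom_succ_succ]; ring
      rw [this]
      exact dvd_add A (B.mul_left _)
    · subst heq
      rw [if_neg (by omega)] at A
      rw [if_pos le_rfl, Nat.sub_self] at B ⊢
      rw [qBinom_zero_right] at B ⊢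
      have : qBinom (n + 1 + (k+1)) (k+1) - (qBinom (n+1) (k+1) + 1) =
          (qBinom (n+(k+1)) k - (qBinom n k + 0)) +
          X ^ (k+1) * (qBinom (n+(k+1)) (k+1) - (qBinom n (k+1) + 1)) +
          (X ^ (k+1) - 1) := by
        rw [hP, qBinom_succ_succ]; ring
      rw [this]
      exact dvd_add (dvd_add A (B.mul_left _)) (qInt_dvd_X_pow_sub_one (k+1))
    · have hpk : p ≤ k := by omega
      rw [if_pos hpk] at A
      rw [if_pos (by omega)] at B ⊢
      have hs1 : k + 1 - p = (k - p) + 1 := by omega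
      rw [hs1] at B ⊢
      rw [qBinom_succ_succ n (k-p)]
      have hXp : qInt p ∣ (X : Polynomial ℤ) ^ (k+1) - X ^ (k - p + 1) := by
        have : (X : Polynomial ℤ) ^ (k+1) - X ^ (k - p + 1) =
            X ^ (k - p + 1) * (X ^ p - 1) := by
          rw [show k + 1 = (k - p + 1) + p from by omega, pow_add]
          ring
        rw [this]
        exact (qInt_dvd_X_pow_sub_one p).mul_left _
      have : qBinom (n + 1 + p) (k+1) -
          (qBinom (n+1) (k+1) + (qBinom n (k-p) + X ^ (k - p + 1) * qBinom n (k - p + 1))) =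
          (qBinom (n+p) k - (qBinom n k + qBinom n (k-p))) +
          X ^ (k+1) * (qBinom (n+p) (k+1) - (qBinom n (k+1) + qBinom n (k - p + 1))) +
          (X ^ (k+1) - X ^ (k - p + 1)) * qBinom n (k - p + 1) := by
        rw [hP, qBinom_succ_succ]; ring
      rw [this]
      exact dvd_add (dvd_add A (B.mul_left _)) (hXp.mul_right _)

theorem q_lucas (p : ℕ) (hp : p.Prime) (a b r s : ℕ) (hb : b ≤ p - 1) (hs : s ≤ p - 1) :
    qInt p ∣ qBinom (a * p + b) (r * p + s) - C (a.choose r : ℤ) * qBinom b s := by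
  have hp2 := hp.two_le
  induction a generalizing r with
  | zero =>
    rcases r with _ | r
    · simp
    · have hple : p ≤ (r+1) * p := Nat.le_mul_of_pos_left p (Nat.succ_pos r)
      rw [qBinom_eq_zero (by omega : 0 * p + b < (r+1) * p + s)]
      simp
  | succ a ih =>
    have hrw : (a + 1) * p + b = (a * p + b) + p := by ring
    rw [hrw]
    have K := key_lemma hp (a * p + b) (r * p + s)
    rcases r with _ | r
    · rw [if_neg (by omega : ¬ p ≤ 0 * p + s)] at K
      have IH := ih 0
      have hdecomp : qBinom (a * p + b + p) (0 * p + s) -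
          C (((a+1)).choose 0 : ℤ) * qBinom b s =
          (qBinom (a * p + b + p) (0 * p + s) - (qBinom (a * p + b) (0 * p + s) + 0)) +
          (qBinom (a * p + b) (0 * p + s) - C ((a).choose 0 : ℤ) * qBinom b s) := by
        simp [Nat.choose_zero_right]
      rw [hdecomp]
      exact dvd_add K IH
    · have hsub : (r+1) * p + s - p = r * p + s := by
        have : (r+1) * p = r * p + p := by ring
        omega
      have hple : p ≤ (r+1) * p := Nat.le_mul_of_pos_left p (Nat.succ_pos r)
      rw [if_pos (by omega : p ≤ (r+1) * p + s), hsub] at K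
      have IH1 := ih (r+1)
      have IH0 := ih r
      have hch : (C (((a+1)).choose (r+1) : ℤ) : Polynomial ℤ) =
          C ((a).choose r : ℤ) + C ((a).choose (r+1) : ℤ) := by
        rw [Nat.choose_succ_succ]
        push_cast
        rw [C_add]
      have hdecomp : qBinom (a * p + b + p) ((r+1) * p + s) -
          C (((a+1)).choose (r+1) : ℤ) * qBinom b s =
          (qBinom (a * p + b + p) ((r+1) * p + s) -
            (qBinom (a * p + b) ((r+1) * p + s) + qBinom (a * p + b) (r * p + s))) +
          (qBinom (a * p + b) ((r+1) * p + s) - C ((a).choose (r+1) : ℤ) * qBinom b s) +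
          (qBinom (a * p + b) (r * p + s) - C ((a).choose r : ℤ) * qBinom b s) := by
        rw [hch]; ring
      rw [hdecomp]
      exact dvd_add (dvd_add K IH1) IH0
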